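/- Let G be a finite group containing an involution t with C_G(t) = ⟨t⟩. Then G has a normal abelian subgroup A of odd order with index 2 in G, and conjugation by t maps each element of A to its inverse. -/

import Mathlib

lemma mem_zpowers_of_orderOf_two {G : Type*} [Group G] {t g : G} (ht : orderOf t = 2)
    (hg : g ∈ Subgroup.zpowers t) : g = 1 ∨ g = t := by
  obtain ⟨k, rfl⟩ := Subgroup.mem_zpowers_iff.mp hg
  have h2 : t ^ (2 : ℤ) = 1 := by
    rw [show (2 : ℤ) = ((2 : ℕ) : ℤ) from rfl, zpow_natCast, ← ht, pow_orderOf_eq_one]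
  rcases Int.even_or_odd k with ⟨m, hm⟩ | ⟨m, hm⟩
  · left
    rw [hm, ← two_mul, zpow_mul, h2, one_zpow]
  · right
    rw [hm, zpow_add, zpow_mul, h2, one_zpow, one_mul, zpow_one]

theorem structure_of_self_centralizing_involution (G : Type*) [Group G] [Fintype G]
    (t : G) (ht : orderOf t = 2)
    (hc : Subgroup.centralizer {t} = Subgroup.zpowers t) :
    ∃ A : Subgroup G, A.Normal ∧ (∀ a b : A, a * b = b * a) ∧
      Odd (Nat.card A) ∧ A.index = 2 ∧ ∀ a ∈ A, t * a * t⁻¹ = a⁻¹ := by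
  haveI : Fact (Nat.Prime 2) := ⟨Nat.prime_two⟩
  have ht1 : t ≠ 1 := by
    intro h; rw [h, orderOf_one] at ht; norm_num at ht
  have htt : t * t = 1 := by
    have := pow_orderOf_eq_one t
    rwa [ht, pow_two] at this
  have htinv : t⁻¹ = t := by
    rw [inv_eq_iff_mul_eq_one, htt]
  have hcard : Nat.card (Subgroup.zpowers t) = 2 := by
    rw [Nat.card_zpowers, ht]
  have hP2 : IsPGroup 2 (Subgroup.zpowers t) :=
    IsPGroup.of_card (by rw [hcard, pow_one])
  obtain ⟨Q, hQle⟩ := hP2.exists_le_sylow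
  have htQ : t ∈ (Q : Subgroup G) := hQle (Subgroup.mem_zpowers t)
  have hQeq : (Q : Subgroup G) = Subgroup.zpowers t := by
    refine le_antisymm ?_ hQle
    haveI : Nontrivial (Q : Subgroup G) := ⟨⟨⟨t, htQ⟩, 1, by simp [ht1]⟩⟩
    haveI := Q.2.center_nontrivial
    obtain ⟨z, hz1⟩ := exists_ne (1 : Subgroup.center (Q : Subgroup G))
    have hzcomm : ∀ q : (Q : Subgroup G), (q : G) * ((z : (Q : Subgroup G)) : G)
        = ((z : (Q : Subgroup G)) : G) * q := by
      intro q
      have hz := z.2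
      rw [Subgroup.mem_center_iff] at hz
      exact_mod_cast congrArg Subtype.val (hz q)
    have hzc : ((z : (Q : Subgroup G)) : G) ∈ Subgroup.centralizer {t} := by
      rw [Subgroup.mem_centralizer_singleton_iff]
      exact (hzcomm ⟨t, htQ⟩).symm
    rw [hc] at hzc
    rcases mem_zpowers_of_orderOf_two ht hzc with h1 | hzt
    · exfalso; apply hz1; ext; exact_mod_cast h1
    · intro q hq
      rw [← hc, Subgroup.mem_centralizer_singleton_iff]
      have := hzcomm ⟨q, hq⟩
      rw [hzt] at this
      exact this
  have hnorm : Subgroup.normalizer ((Q : Subgroup G) : Set G) ≤ Subgroup.centralizer (Q : Set G) := by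
    intro g hg
    rw [Subgroup.mem_normalizer_iff] at hg
    have hgt : g * t * g⁻¹ ∈ (Q : Subgroup G) := (hg t).mp htQ
    rw [hQeq] at hgt
    rcases mem_zpowers_of_orderOf_two ht hgt with h1 | hgtt
    · exfalso
      apply ht1
      have : t = g⁻¹ * (g * t * g⁻¹) * g := by group
      rw [h1] at this
      rw [this]; group
    · have hgc : t * g = g * t := by
        calc t * g = (g * t * g⁻¹) * g := by rw [hgtt]
        _ = g * t := by group
      rw [Subgroup.mem_centralizer_iff]
      intro q hq
      have hq' : q ∈ (Q : Subgroup G) := hq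
      rw [hQeq] at hq'
      rcases mem_zpowers_of_orderOf_two ht hq' with rfl | rfl
      · simp
      · exact hgc
  set A := (MonoidHom.transferSylow Q hnorm).ker with hA
  have hcomp : Subgroup.IsComplement' A Q :=
    MonoidHom.ker_transferSylow_isComplement' Q hnorm
  have hAnormal : A.Normal := MonoidHom.normal_ker _
  have hodd : Odd (Nat.card A) := by
    have h2 := MonoidHom.not_dvd_card_ker_transferSylow Q hnorm
    rw [Nat.odd_iff, ← Nat.not_even_iff]
    intro he
    exact h2 (even_iff_two_dvd.mp he)
  have hQcard : Nat.card (Q : Subgroup G) = 2 := by rw [hQeq]; exact hcard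
  have hindex : A.index = 2 := by
    rw [hcomp.symm.index_eq_card, hQcard]
  haveI := hAnormal
  set Φ : A →* A := (MulAut.conjNormal t : MulAut A).toMonoidHom with hΦ
  have hΦapp : ∀ a : A, ((Φ a : A) : G) = t * a * t⁻¹ := fun a =>
    MulAut.conjNormal_apply t a
  have hfpf : MonoidHom.FixedPointFree Φ := by
    intro a hfix
    have h1 : t * (a : G) * t⁻¹ = a := by rw [← hΦapp a, hfix]
    have hac : (a : G) ∈ Subgroup.centralizer {t} := by
      rw [Subgroup.mem_centralizer_singleton_iff]
      calc (a : G) * t = (t * a * t⁻¹) * t := by rw [h1]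
      _ = t * a := by group
    rw [hc, ← hQeq] at hac
    have hmem : (a : G) ∈ A ⊓ (Q : Subgroup G) := ⟨a.2, hac⟩
    rw [hcomp.disjoint.eq_bot] at hmem
    exact Subtype.ext hmem
  have hinvol : Function.Involutive Φ := by
    intro a
    ext
    rw [hΦapp, hΦapp, htinv]
    calc t * (t * (a : G) * t) * t = (t * t) * a * (t * t) := by group
    _ = a := by rw [htt]; group
  have hcoeinv := hfpf.coe_eq_inv_of_involutive hinvol
  refine ⟨A, hAnormal, ?_, hodd, hindex, ?_⟩
  · intro a b
    exact hfpf.commute_all_of_involutive hinvol a b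
  · intro a ha
    have h1 := congrFun hcoeinv ⟨a, ha⟩
    have h2 := congrArg Subtype.val h1
    rw [hΦapp] at h2
    simpa using h2
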